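/- arXiv:1806.10007 — 2 statements merged into one kernel-verified Lean document; each statement's English description precedes it below -/
import Mathlib

section
/- For all u, v ∈ V: A*_L(u⋆v) = K(u)⋆A*_L(v) + A*_L(u)⋆v; B*_L(u⋆v) = K⁻¹(u)⋆B*_L(v) + B*_L(u)⋆v; A*_R(u⋆v) = u⋆A*_R(v) + A*_R(u)⋆K(v); B*_R(u⋆v) = u⋆B*_R(v) + B*_R(u)⋆K⁻¹(v). In particular, A*_L is a (K,I)-derivation, B*_L is a (K⁻¹,I)-derivation, A*_R is an (I,K)-derivation, and B*_R is an (I,K⁻¹)-derivation of the q-shuffle algebra (V,⋆). -/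
noncomputable section
namespace SqPaper

/-- The two letters: `0 ↦ A`, `1 ↦ B`. -/
abbrev Ltr := Fin 2
def lA : Ltr := 0
def lB : Ltr := 1

/-- The pairing `⟨ , ⟩` on letters: `⟨A,A⟩=⟨B,B⟩=2`, `⟨A,B⟩=⟨B,A⟩=-2`. -/
def brk (x y : Ltr) : ℤ := if x = y then 2 else -2

variable (F : Type*) [Field F]

/-- The free algebra `V` on the two generators, realized as the monoid algebra of the
free monoid on two letters; the words form the standard basis. -/
abbrev FA := MonoidAlgebra F (FreeMonoid Ltr)

/-- The standard basis vector attached to a word (list of letters). -/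
def wd (l : List Ltr) : FA F := MonoidAlgebra.single (FreeMonoid.ofList l) 1

def Agen : FA F := wd F [lA]
def Bgen : FA F := wd F [lB]

/-- View an element of `V` as a finitely supported function on words. -/
def fsp (v : FA F) : FreeMonoid Ltr →₀ F := v.coeff

/-- The symmetric bilinear form on `V` for which the standard basis of words is orthonormal. -/
def form (u v : FA F) : F := (fsp F u).sum fun w c => c * (fsp F v) w

/-- Extend a function on words to an `F`-linear map on `V`. -/
def mkMap {M : Type*} [AddCommMonoid M] [Module F M] (f : List Ltr → M) :
    FA F →ₗ[F] M :=
  (Finsupp.lsum F fun w => LinearMap.toSpanSingleton F M (f (FreeMonoid.toList w))) ∘ₗ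
    (MonoidAlgebra.coeffLinearEquiv F).toLinearMap

/-- `[3]_q = (q³ - q⁻³)/(q - q⁻¹)`. -/
def tri (q : F) : F := (q ^ 3 - q⁻¹ ^ 3) / (q - q⁻¹)

/-- The q-shuffle product on words. -/
def shufW (q : F) : List Ltr → List Ltr → FA F
  | [], v => wd F v
  | u, [] => wd F u
  | a :: u, b :: v =>
      wd F [a] * shufW q u (b :: v) +
        (q ^ (((a :: u).map (fun x => brk x b)).sum)) • (wd F [b] * shufW q (a :: u) v)
  termination_by u v => u.length + v.length

/-- The q-shuffle product `⋆` on `V`, as a bilinear map. -/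
def qshuf (q : F) : FA F →ₗ[F] FA F →ₗ[F] FA F :=
  mkMap F fun u => mkMap F fun v => shufW F q u v

/-- Iterated `⋆`-product of the letters of a word. -/
def thetaW (q : F) : List Ltr → FA F
  | [] => 1
  | a :: t => qshuf F q (wd F [a]) (thetaW q t)

/-- `θ : V → V`, the algebra homomorphism from the free algebra to the q-shuffle algebra
with `θ(A) = A`, `θ(B) = B`. -/
def theta (q : F) : FA F →ₗ[F] FA F := mkMap F fun l => thetaW F q l

/-- `A_L`, left multiplication by `A` in the free algebra. -/
def AL : FA F →ₗ[F] FA F := LinearMap.mulLeft F (Agen F)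
def BL : FA F →ₗ[F] FA F := LinearMap.mulLeft F (Bgen F)
def AR : FA F →ₗ[F] FA F := LinearMap.mulRight F (Agen F)
def BR : FA F →ₗ[F] FA F := LinearMap.mulRight F (Bgen F)

/-- `X*_L` (for the letter `x`): deletes the letter `x` from the front of a word. -/
def delL (x : Ltr) : FA F →ₗ[F] FA F :=
  mkMap F fun l => if l.head? = some x then wd F l.tail else 0

/-- `X*_R` (for the letter `x`): deletes the letter `x` from the end of a word. -/
def delR (x : Ltr) : FA F →ₗ[F] FA F :=
  mkMap F fun l => if l.getLast? = some x then wd F l.dropLast else 0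

/-- `X_ℓ`: left q-shuffle multiplication by the letter `x`. -/
def shL (q : F) (x : Ltr) : FA F →ₗ[F] FA F := qshuf F q (wd F [x])

/-- `X_r`: right q-shuffle multiplication by the letter `x`. -/
def shR (q : F) (x : Ltr) : FA F →ₗ[F] FA F := (qshuf F q).flip (wd F [x])

/-- `X*_ℓ`: the weighted deletion map, deleting an occurrence of the letter `x`
with weight `q^{⟨v₁,x⟩+⋯+⟨v_{i-1},x⟩}`. -/
def lowL (q : F) (x : Ltr) : FA F →ₗ[F] FA F :=
  mkMap F fun l =>
    ∑ i ∈ Finset.range l.length,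
      if l[i]? = some x then
        (q ^ (((l.take i).map (fun y => brk y x)).sum)) • wd F (l.eraseIdx i)
      else 0

/-- `X*_r`: the weighted deletion map, deleting an occurrence of the letter `x`
with weight `q^{⟨vₙ,x⟩+⋯+⟨v_{i+1},x⟩}`. -/
def lowR (q : F) (x : Ltr) : FA F →ₗ[F] FA F :=
  mkMap F fun l =>
    ∑ i ∈ Finset.range l.length,
      if l[i]? = some x then
        (q ^ (((l.drop (i + 1)).map (fun y => brk y x)).sum)) • wd F (l.eraseIdx i)
      else 0

/-- `K`, the algebra automorphism of the free algebra `V` with `K(A) = q²A`, `K(B) = q⁻²B`;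
on a word `v = v₁⋯vₙ` it acts as `K(v) = v·q^{⟨v₁,A⟩+⋯+⟨vₙ,A⟩}`. -/
def Kop (q : F) : FA F →ₗ[F] FA F :=
  mkMap F fun l => (q ^ ((l.map (fun y => brk y lA)).sum)) • wd F l

/-- `K⁻¹`; on a word `v = v₁⋯vₙ` it acts as `K⁻¹(v) = v·q^{⟨v₁,B⟩+⋯+⟨vₙ,B⟩}`. -/
def Kinv (q : F) : FA F →ₗ[F] FA F :=
  mkMap F fun l => (q ^ ((l.map (fun y => brk y lB)).sum)) • wd F l

/-- `T`, the automorphism of the free algebra swapping `A` and `B`. -/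
def Top : FA F →ₗ[F] FA F :=
  mkMap F fun l => wd F (l.map (fun x => if x = lA then lB else lA))

/-- `Â = Q(A_L − K B_R)` and `B̂ = Q(B_L − K⁻¹ A_R)` where `Q = 1 - q²`. -/
def hatOp (q : F) (a : Ltr) : FA F →ₗ[F] FA F :=
  if a = lA then (1 - q ^ 2) • (AL F - Kop F q ∘ₗ BR F)
  else (1 - q ^ 2) • (BL F - Kinv F q ∘ₗ AR F)

def phiW (q : F) : List Ltr → FA F
  | [] => 1
  | a :: t => hatOp F q a (phiW q t)

/-- The map `φ`: `φ(1) = 1` and `φ(v₁⋯vₙ) = v̂₁v̂₂⋯v̂ₙ(1)`. -/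
def phi (q : F) : FA F →ₗ[F] FA F := mkMap F fun l => phiW F q l

/-- `ψ = K B_R A*_L + K⁻¹ A_R B*_L`. -/
def psi (q : F) : FA F →ₗ[F] FA F :=
  Kop F q ∘ₗ BR F ∘ₗ delL F lA + Kinv F q ∘ₗ AR F ∘ₗ delL F lB

/-- `V_n`, the span of the words of length `n`. -/
def Vn (n : ℕ) : Submodule F (FA F) :=
  Submodule.span F { x | ∃ l : List Ltr, l.length = n ∧ x = wd F l }

/-- `J⁺ = A³B − [3]_q A²BA + [3]_q ABA² − BA³`. -/
def Jp (q : F) : FA F :=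
  Agen F ^ 3 * Bgen F - tri F q • (Agen F ^ 2 * Bgen F * Agen F)
    + tri F q • (Agen F * Bgen F * Agen F ^ 2) - Bgen F * Agen F ^ 3

/-- `J⁻ = B³A − [3]_q B²AB + [3]_q BAB² − AB³`. -/
def Jm (q : F) : FA F :=
  Bgen F ^ 3 * Agen F - tri F q • (Bgen F ^ 2 * Agen F * Bgen F)
    + tri F q • (Bgen F * Agen F * Bgen F ^ 2) - Agen F * Bgen F ^ 3

/-- `J`, the two-sided ideal of the free algebra generated by `J⁺` and `J⁻`
(realized as the `F`-span of the elements `a·J^±·b`). -/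
def Jsub (q : F) : Submodule F (FA F) :=
  Submodule.span F { x | ∃ a b : FA F, x = a * Jp F q * b ∨ x = a * Jm F q * b }

/-- `U`, the subalgebra of the q-shuffle algebra `(V,⋆)` generated by `A` and `B`,
realized as the span of all `⋆`-products of the letters. -/
def Usub (q : F) : Submodule F (FA F) :=
  Submodule.span F (Set.range fun l : List Ltr => thetaW F q l)

/-- A `□_q`-module structure on an `F`-vector space `M`: four operators
`x₀, x₁, x₂, x₃` (indices mod 4) satisfying the q-Weyl and q-Serre relations. -/
structure SqAct (q : F) (M : Type*) [AddCommGroup M] [Module F M] where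
  x : ZMod 4 → Module.End F M
  weyl : ∀ i : ZMod 4,
    q • (x i * x (i + 1)) - q⁻¹ • (x (i + 1) * x i) = (q - q⁻¹) • (1 : Module.End F M)
  serre : ∀ i : ZMod 4,
    x i ^ 3 * x (i + 2) - tri F q • (x i ^ 2 * x (i + 2) * x i)
      + tri F q • (x i * x (i + 2) * x i ^ 2) - x (i + 2) * x i ^ 3 = 0

variable {F} {q : F} {M : Type*} [AddCommGroup M] [Module F M]

/-- A `□_q`-module `M` is generated by `ξ` if no proper submodule
(subspace invariant under all the `xᵢ`) contains `ξ`. -/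
def SqAct.Gen (S : SqAct F q M) (ξ : M) : Prop :=
  ∀ W : Submodule F M, (∀ i : ZMod 4, ∀ m ∈ W, S.x i m ∈ W) → ξ ∈ W → W = ⊤

/-- `W_n`: the span of the vectors `u₁u₂⋯uₙ·ξ` with each `uᵢ ∈ {x₀, x₂}`. -/
def SqAct.Wn (S : SqAct F q M) (ξ : M) (n : ℕ) : Submodule F M :=
  Submodule.span F
    { m | ∃ l : List (ZMod 4), l.length = n ∧ (∀ i ∈ l, i = 0 ∨ i = 2) ∧
        m = l.foldr (fun i acc => S.x i acc) ξ }

section Aux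
variable (F) (q)

lemma mkMap_wd {M : Type*} [AddCommMonoid M] [Module F M] (f : List Ltr → M) (l : List Ltr) :
    mkMap F f (wd F l) = f l := by
  rw [mkMap, wd]
  change (Finsupp.lsum F fun w => LinearMap.toSpanSingleton F M (f (FreeMonoid.toList w)))
    (Finsupp.single (FreeMonoid.ofList l) (1 : F)) = f l
  erw [Finsupp.lsum_single (S := F)]; simp

lemma wd_mul (l m : List Ltr) : wd F l * wd F m = wd F (l ++ m) := by
  rw [wd, wd, wd, MonoidAlgebra.single_mul_single, one_mul]; rfl








lemma qshuf_wd (l m : List Ltr) : qshuf F q (wd F l) (wd F m) = shufW F q l m := by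
  rw [qshuf, mkMap_wd, mkMap_wd]

lemma shufW_nil_left (m : List Ltr) : shufW F q [] m = wd F m := by
  rw [shufW]

lemma shufW_nil_right (l : List Ltr) : shufW F q l [] = wd F l := by
  cases l <;> rw [shufW] <;> simp

lemma delL_wd (x : Ltr) (l : List Ltr) :
    delL F x (wd F l) = if l.head? = some x then wd F l.tail else 0 := mkMap_wd ..

lemma delR_wd (x : Ltr) (l : List Ltr) :
    delR F x (wd F l) = if l.getLast? = some x then wd F l.dropLast else 0 := mkMap_wd ..

lemma Kop_wd (l : List Ltr) :
    Kop F q (wd F l) = (q ^ ((l.map (fun y => brk y lA)).sum)) • wd F l := mkMap_wd ..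

lemma Kinv_wd (l : List Ltr) :
    Kinv F q (wd F l) = (q ^ ((l.map (fun y => brk y lB)).sum)) • wd F l := mkMap_wd ..

lemma shufW_cons (a b : Ltr) (u v : List Ltr) :
    shufW F q (a :: u) (b :: v) =
      wd F [a] * shufW F q u (b :: v) +
        (q ^ (((a :: u).map (fun x => brk x b)).sum)) • (wd F [b] * shufW F q (a :: u) v) := by
  rw [shufW]

lemma brk_comm (x y : Ltr) : brk x y = brk y x := by
  simp [brk, eq_comm]
lemma rrec (hq : q ≠ 0) : ∀ (n : ℕ) (l v : List Ltr), l.length + v.length ≤ n → ∀ p s : Ltr,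
    shufW F q (l ++ [p]) (v ++ [s]) =
      shufW F q (l ++ [p]) v * wd F [s] +
        (q ^ (((v ++ [s]).map (fun y => brk y p)).sum)) • (shufW F q l (v ++ [s]) * wd F [p]) := by
  intro n
  induction n with
  | zero =>
    intro l v h p s
    have hl : l = [] := by cases l <;> simp_all
    have hv : v = [] := by cases v <;> simp_all
    subst hl; subst hv
    simp only [List.nil_append, shufW_cons, shufW_nil_left, shufW_nil_right,
      List.map_cons, List.map_nil, List.sum_cons, List.sum_nil, brk_comm]
  | succ n ih =>
    intro l v h p s
    match l, v with
    | [], [] =>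
      simp only [List.nil_append, shufW_cons, shufW_nil_left, shufW_nil_right,
        List.map_cons, List.map_nil, List.sum_cons, List.sum_nil, brk_comm]
    | [], b :: v' =>
      have h' : ([] : List Ltr).length + v'.length ≤ n := by simp at h ⊢; omega
      have H := ih [] v' h' p s
      simp only [List.nil_append, shufW_nil_left] at H
      simp only [List.nil_append, List.cons_append, shufW_cons, shufW_nil_left, H]
      simp only [mul_add, add_mul, smul_add, smul_smul, mul_smul_comm, smul_mul_assoc,
        mul_assoc, wd_mul, List.map_cons, List.map_append, List.sum_cons, List.sum_append,
        List.map_nil, List.sum_nil, zpow_add₀ hq, List.cons_append, List.append_assoc,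
        List.singleton_append, List.append_nil, List.nil_append, zpow_zero, mul_one, one_mul, one_smul, brk_comm]
      module
    | a :: l', [] =>
      have h' : l'.length + ([] : List Ltr).length ≤ n := by simp at h ⊢; omega
      have H := ih l' [] h' p s
      simp only [List.nil_append, shufW_nil_right] at H
      simp only [List.cons_append, List.nil_append, shufW_cons, shufW_nil_right, H]
      simp only [mul_add, add_mul, smul_add, smul_smul, mul_smul_comm, smul_mul_assoc,
        mul_assoc, wd_mul, List.map_cons, List.map_append, List.sum_cons, List.sum_append,
        List.map_nil, List.sum_nil, zpow_add₀ hq, List.cons_append, List.append_assoc,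
        List.singleton_append, List.append_nil, List.nil_append, zpow_zero, mul_one, one_mul, one_smul, brk_comm]
      module
    | a :: l', b :: v' =>
      have h1 : l'.length + (b :: v').length ≤ n := by simp at h ⊢; omega
      have h2 : (a :: l').length + v'.length ≤ n := by simp at h ⊢; omega
      have H1 := ih l' (b :: v') h1 p s
      have H2 := ih (a :: l') v' h2 p s
      simp only [List.cons_append, List.nil_append] at H1 H2
      simp only [List.cons_append, shufW_cons, H1, H2]
      simp only [mul_add, add_mul, smul_add, smul_smul, mul_smul_comm, smul_mul_assoc,
        mul_assoc, wd_mul, List.map_cons, List.map_append, List.sum_cons, List.sum_append,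
        List.map_nil, List.sum_nil, zpow_add₀ hq, List.cons_append, List.append_assoc,
        List.singleton_append, List.append_nil, List.nil_append, zpow_zero, mul_one, one_mul, one_smul, brk_comm]
      module
lemma single_eq_smul_wd (a : FreeMonoid Ltr) (b : F) :
    (MonoidAlgebra.single a b : FA F) = b • wd F (FreeMonoid.toList a) := by
  rw [wd]
  rw [MonoidAlgebra.smul_single']; simp

lemma fa_ext {M : Type*} [AddCommMonoid M] [Module F M] (f g : FA F →ₗ[F] M)
    (h : ∀ l, f (wd F l) = g (wd F l)) : f = g := by
  refine MonoidAlgebra.lhom_ext' fun a => ?_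
  ext
  have := h (FreeMonoid.toList a)
  simpa [wd] using h (FreeMonoid.toList a)

lemma delL_single_mul (x a : Ltr) (w : FA F) :
    delL F x (wd F [a] * w) = if a = x then w else 0 := by
  have key : (delL F x).comp (LinearMap.mulLeft F (wd F [a])) =
      if a = x then LinearMap.id else 0 := by
    refine fa_ext F _ _ fun l => ?_
    by_cases hax : a = x <;> simp [hax, wd_mul, delL_wd]
  have := DFunLike.congr_fun key w
  simpa using this.trans (by by_cases hax : a = x <;> simp [hax])

lemma delR_mul_single (x s : Ltr) (w : FA F) :
    delR F x (w * wd F [s]) = if s = x then w else 0 := by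
  have key : (delR F x).comp (LinearMap.mulRight F (wd F [s])) =
      if s = x then LinearMap.id else 0 := by
    refine fa_ext F _ _ fun l => ?_
    by_cases hsx : s = x <;>
      simp [hsx, wd_mul, delR_wd, List.getLast?_concat, List.dropLast_concat]
  have := DFunLike.congr_fun key w
  simpa using this.trans (by by_cases hsx : s = x <;> simp [hsx])

lemma qshuf_one_left (w : FA F) : qshuf F q (wd F []) w = w := by
  have key : qshuf F q (wd F []) = LinearMap.id := by
    refine fa_ext F _ _ fun l => ?_
    simp [qshuf_wd, shufW_nil_left]
  simp [key]

lemma qshuf_one_right (w : FA F) : qshuf F q w (wd F []) = w := by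
  have key : (qshuf F q).flip (wd F []) = LinearMap.id := by
    refine fa_ext F _ _ fun l => ?_
    simp [LinearMap.flip_apply, qshuf_wd, shufW_nil_right]
  have := DFunLike.congr_fun key w
  simpa [LinearMap.flip_apply] using this
lemma delL_shufW (x : Ltr) (l m : List Ltr) :
    delL F x (shufW F q l m) =
      (q ^ ((l.map (fun y => brk y x)).sum)) • qshuf F q (wd F l) (delL F x (wd F m)) +
        qshuf F q (delL F x (wd F l)) (wd F m) := by
  match l, m with
  | [], m =>
    simp [shufW_nil_left, delL_wd, qshuf_one_left]
  | a :: u, [] =>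
    simp [shufW_nil_right, delL_wd, qshuf_one_right]
  | a :: u, b :: v =>
    rw [shufW_cons, map_add, map_smul, delL_single_mul, delL_single_mul,
      delL_wd, delL_wd]
    simp only [List.head?_cons, List.tail_cons, Option.some.injEq]
    by_cases hax : a = x <;> by_cases hbx : b = x <;>
      subst_eqs <;>
      simp [*, qshuf_wd, add_comm]

lemma delR_shufW (hq : q ≠ 0) (x : Ltr) (l m : List Ltr) :
    delR F x (shufW F q l m) =
      qshuf F q (wd F l) (delR F x (wd F m)) +
        (q ^ ((m.map (fun y => brk y x)).sum)) • qshuf F q (delR F x (wd F l)) (wd F m) := by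
  rcases List.eq_nil_or_concat l with rfl | ⟨u, p, rfl⟩
  · simp [shufW_nil_left, delR_wd, qshuf_one_left]
  rcases List.eq_nil_or_concat m with rfl | ⟨v, s, rfl⟩
  · simp [shufW_nil_right, delR_wd, qshuf_one_right]
  simp only [List.concat_eq_append]
  rw [rrec F q hq (u.length + v.length) u v le_rfl p s, map_add, map_smul,
    delR_mul_single, delR_mul_single, delR_wd, delR_wd]
  simp only [List.getLast?_concat, List.dropLast_concat, Option.some.injEq]
  by_cases hsx : s = x <;> by_cases hpx : p = x <;>
    subst_eqs <;>
    simp [*, qshuf_wd, add_comm]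
lemma deriv_L (x : Ltr) (Kx : FA F →ₗ[F] FA F)
    (hK : ∀ l, Kx (wd F l) = (q ^ ((l.map (fun y => brk y x)).sum)) • wd F l)
    (u v : FA F) :
    delL F x (qshuf F q u v) = qshuf F q (Kx u) (delL F x v) + qshuf F q (delL F x u) v := by
  have E : (qshuf F q).compr₂ (delL F x) =
      ((qshuf F q).comp Kx).compl₂ (delL F x) + (qshuf F q).comp (delL F x) := by
    refine fa_ext F _ _ fun l => ?_
    refine fa_ext F _ _ fun m => ?_
    simp only [LinearMap.compr₂_apply, LinearMap.compl₂_apply, LinearMap.comp_apply,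
      LinearMap.add_apply, qshuf_wd, hK, map_smul, LinearMap.smul_apply]
    rw [delL_shufW]
  have h2 := DFunLike.congr_fun (DFunLike.congr_fun E u) v
  simpa using h2

lemma deriv_R (hq : q ≠ 0) (x : Ltr) (Kx : FA F →ₗ[F] FA F)
    (hK : ∀ l, Kx (wd F l) = (q ^ ((l.map (fun y => brk y x)).sum)) • wd F l)
    (u v : FA F) :
    delR F x (qshuf F q u v) = qshuf F q u (delR F x v) + qshuf F q (delR F x u) (Kx v) := by
  have E : (qshuf F q).compr₂ (delR F x) =
      (qshuf F q).compl₂ (delR F x) + ((qshuf F q).comp (delR F x)).compl₂ Kx := by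
    refine fa_ext F _ _ fun l => ?_
    refine fa_ext F _ _ fun m => ?_
    simp only [LinearMap.compr₂_apply, LinearMap.compl₂_apply, LinearMap.comp_apply,
      LinearMap.add_apply, qshuf_wd, hK, map_smul, LinearMap.smul_apply]
    rw [delR_shufW F q hq]
  have h2 := DFunLike.congr_fun (DFunLike.congr_fun E u) v
  simpa using h2


end Aux

end SqPaper
open SqPaper in
/-- `A*_L, B*_L, A*_R, B*_R` are twisted derivations of the q-shuffle algebra
`(V,⋆)`: `A*_L` is a `(K,I)`-derivation, `B*_L` a `(K⁻¹,I)`-derivation, `A*_R` an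
`(I,K)`-derivation and `B*_R` an `(I,K⁻¹)`-derivation. -/
theorem del_derivations_shuffle (F : Type*) [Field F] (q : F) (hq : q ≠ 0)
    (hq1 : ∀ k : ℕ, 0 < k → q ^ k ≠ 1) :
    ∀ u v : FA F,
      delL F lA (qshuf F q u v) =
          qshuf F q (Kop F q u) (delL F lA v) + qshuf F q (delL F lA u) v ∧
      delL F lB (qshuf F q u v) =
          qshuf F q (Kinv F q u) (delL F lB v) + qshuf F q (delL F lB u) v ∧
      delR F lA (qshuf F q u v) =
          qshuf F q u (delR F lA v) + qshuf F q (delR F lA u) (Kop F q v) ∧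
      delR F lB (qshuf F q u v) =
          qshuf F q u (delR F lB v) + qshuf F q (delR F lB u) (Kinv F q v) :=
  fun u v =>
    ⟨deriv_L F q lA (Kop F q) (Kop_wd F q) u v,
     deriv_L F q lB (Kinv F q) (Kinv_wd F q) u v,
     deriv_R F q hq lA (Kop F q) (Kop_wd F q) u v,
     deriv_R F q hq lB (Kinv F q) (Kinv_wd F q) u v⟩
end
end

section
/- The map φ satisfies, as identities of F-linear maps on V: φ∘A_L = Q(A_L − K B_R)∘φ, φ∘B_L = Q(B_L − K⁻¹ A_R)∘φ, φ∘(Q(A*_ℓ − B*_r K)) = A*_ℓ∘φ, and φ∘(Q(B*_ℓ − A*_r K⁻¹)) = B*_ℓ∘φ. -/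
noncomputable section
namespace SqAux
open SqPaper

variable {F : Type*} [Field F] {q : F}

lemma mk_apply {M : Type*} [AddCommMonoid M] [Module F M] (f : List Ltr → M) (l : List Ltr) :
    mkMap F f (wd F l) = f l := by
  simp [mkMap, wd, Finsupp.lsum, LinearMap.toSpanSingleton, MonoidAlgebra.coeff_single]

lemma wd_ext {M : Type*} [AddCommMonoid M] [Module F M] {f g : FA F →ₗ[F] M}
    (h : ∀ l, f (wd F l) = g (wd F l)) : f = g := by
  refine MonoidAlgebra.lhom_ext' fun a => LinearMap.ext_ring ?_
  have := h a.toList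
  simpa [wd, FreeMonoid.ofList_toList] using this

lemma wd_cons (a : Ltr) (l : List Ltr) : wd F (a :: l) = wd F [a] * wd F l := by
  simp [wd, MonoidAlgebra.single_mul_single]

lemma wd_nil : (wd F [] : FA F) = 1 := rfl

end SqAux
namespace SqAux
open SqPaper

variable {F : Type*} [Field F] (q : F)

/-- Left multiplication by the letter `z`. -/
def mL (z : Ltr) : FA F →ₗ[F] FA F := LinearMap.mulLeft F (wd F [z])
/-- Right multiplication by the letter `z`. -/
def mR (z : Ltr) : FA F →ₗ[F] FA F := LinearMap.mulRight F (wd F [z])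
/-- The generic weight operator; `Kg lA = Kop`, `Kg lB = Kinv`. -/
def Kg (x : Ltr) : FA F →ₗ[F] FA F :=
  mkMap F fun l => (q ^ ((l.map (fun y => brk y x)).sum)) • wd F l

lemma Kg_A : Kg q lA = Kop F q := rfl
lemma Kg_B : Kg q lB = Kinv F q := rfl
lemma mL_A : mL lA = AL F := rfl
lemma mL_B : mL lB = BL F := rfl
lemma mR_A : mR lA = AR F := rfl
lemma mR_B : mR lB = BR F := rfl

variable {q}

lemma mL_wd (z : Ltr) (l : List Ltr) : mL (F := F) z (wd F l) = wd F (z :: l) := by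
  rw [wd_cons]; rfl

lemma Kg_wd (x : Ltr) (l : List Ltr) :
    Kg q x (wd F l) = (q ^ ((l.map (fun y => brk y x)).sum)) • wd F l := mk_apply _ _

lemma lowL_wd (x : Ltr) (l : List Ltr) :
    lowL F q x (wd F l) = ∑ i ∈ Finset.range l.length,
      if l[i]? = some x then
        (q ^ (((l.take i).map (fun y => brk y x)).sum)) • wd F (l.eraseIdx i)
      else 0 := mk_apply _ _

lemma lowR_wd (x : Ltr) (l : List Ltr) :
    lowR F q x (wd F l) = ∑ i ∈ Finset.range l.length,
      if l[i]? = some x then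
        (q ^ (((l.drop (i + 1)).map (fun y => brk y x)).sum)) • wd F (l.eraseIdx i)
      else 0 := mk_apply _ _

lemma lowL_nil (x : Ltr) : lowL F q x (wd F []) = 0 := by rw [lowL_wd]; simp
lemma lowR_nil (x : Ltr) : lowR F q x (wd F []) = 0 := by rw [lowR_wd]; simp
lemma Kg_nil (x : Ltr) : Kg q x (wd F []) = (1 : FA F) := by rw [Kg_wd]; simp [wd_nil]

lemma lowL_cons (hq : q ≠ 0) (x a : Ltr) (t : List Ltr) :
    lowL F q x (wd F (a :: t)) =
      (if a = x then wd F t else 0) +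
        q ^ (brk a x) • (wd F [a] * lowL F q x (wd F t)) := by
  rw [lowL_wd, lowL_wd]
  simp only [List.length_cons]
  rw [Finset.sum_range_succ', add_comm]
  congr 1
  · simp
  · rw [Finset.mul_sum, Finset.smul_sum]
    refine Finset.sum_congr rfl fun i _ => ?_
    simp only [List.getElem?_cons_succ, List.take_succ_cons, List.eraseIdx_cons_succ,
      List.map_cons, List.sum_cons, mul_ite, smul_ite, mul_zero, smul_zero]
    by_cases h : t[i]? = some x
    · rw [if_pos h, if_pos h, zpow_add₀ hq, mul_smul_comm, wd_cons, smul_smul]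
    · rw [if_neg h, if_neg h]

lemma lowR_cons (x a : Ltr) (t : List Ltr) :
    lowR F q x (wd F (a :: t)) =
      (if a = x then Kg q x (wd F t) else 0) + wd F [a] * lowR F q x (wd F t) := by
  rw [lowR_wd, lowR_wd, Kg_wd]
  simp only [List.length_cons]
  rw [Finset.sum_range_succ', add_comm]
  congr 1
  · simp
  · rw [Finset.mul_sum]
    refine Finset.sum_congr rfl fun i _ => ?_
    simp only [List.getElem?_cons_succ, List.eraseIdx_cons_succ, List.drop_succ_cons,
      mul_ite, mul_zero]
    by_cases h : t[i]? = some x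
    · rw [if_pos h, if_pos h, mul_smul_comm, wd_cons]
    · rw [if_neg h, if_neg h]

end SqAux
namespace SqAux
open SqPaper

variable {F : Type*} [Field F] {q : F}

lemma brk_same (x : Ltr) : brk x x = 2 := by simp [brk]
lemma brk_diff {a x : Ltr} (h : a ≠ x) : brk a x = -2 := by simp [brk, h]
lemma brk_opp {x z : Ltr} (h : x ≠ z) (y : Ltr) : brk y x + brk y z = 0 := by
  revert h; revert x z y; decide

lemma brk_sum_opp {x z : Ltr} (h : x ≠ z) (l : List Ltr) :
    ((l.map fun y => brk y x).sum + (l.map fun y => brk y z).sum) = 0 := by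
  induction l with
  | nil => simp
  | cons a t ih =>
      simp only [List.map_cons, List.sum_cons]
      have := brk_opp h a
      omega

lemma op_ext {f g : FA F →ₗ[F] FA F} (h : ∀ l, f (wd F l) = g (wd F l)) (v : FA F) :
    f v = g v := DFunLike.congr_fun (wd_ext h) v

lemma Kg_cons (hq : q ≠ 0) (x a : Ltr) (t : List Ltr) :
    Kg q x (wd F (a :: t)) = q ^ (brk a x) • (wd F [a] * Kg q x (wd F t)) := by
  rw [Kg_wd, Kg_wd, mul_smul_comm, ← wd_cons, smul_smul, List.map_cons, List.sum_cons,
    zpow_add₀ hq]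

/-- `Kg` cons rule for arbitrary vectors. -/
lemma Kg_mul (hq : q ≠ 0) (x a : Ltr) (v : FA F) :
    Kg q x (wd F [a] * v) = q ^ (brk a x) • (wd F [a] * Kg q x v) := by
  have H : Kg q x ∘ₗ mL a = q ^ (brk a x) • (mL a ∘ₗ Kg q x) := by
    apply wd_ext; intro l
    simp only [LinearMap.comp_apply, LinearMap.smul_apply, mL_wd, Kg_cons hq]
    rfl
  simpa [mL] using DFunLike.congr_fun H v

/-- `lowL` cons rule for arbitrary vectors. -/
lemma lowL_mul (hq : q ≠ 0) (x a : Ltr) (v : FA F) :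
    lowL F q x (wd F [a] * v) =
      (if a = x then v else 0) + q ^ (brk a x) • (wd F [a] * lowL F q x v) := by
  have H : lowL F q x ∘ₗ mL a =
      (if a = x then 1 else 0) + q ^ (brk a x) • (mL a ∘ₗ lowL F q x) := by
    apply wd_ext; intro l
    simp only [LinearMap.comp_apply, LinearMap.add_apply, LinearMap.smul_apply, mL_wd,
      lowL_cons hq, apply_ite (fun f : FA F →ₗ[F] FA F => f (wd F l)), Module.End.one_apply,
      LinearMap.zero_apply]
    rfl
  simpa [mL, apply_ite (fun f : FA F →ₗ[F] FA F => f v)] using DFunLike.congr_fun H v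

/-- `lowR` cons rule for arbitrary vectors. -/
lemma lowR_mul (x a : Ltr) (v : FA F) :
    lowR F q x (wd F [a] * v) =
      (if a = x then Kg q x v else 0) + wd F [a] * lowR F q x v := by
  have H : lowR F q x ∘ₗ mL a = (if a = x then Kg q x else 0) + mL a ∘ₗ lowR F q x := by
    apply wd_ext; intro l
    simp only [LinearMap.comp_apply, LinearMap.add_apply, mL_wd, lowR_cons,
      apply_ite (fun f : FA F →ₗ[F] FA F => f (wd F l)), LinearMap.zero_apply]
    rfl
  simpa [mL, apply_ite (fun f : FA F →ₗ[F] FA F => f v)] using DFunLike.congr_fun H v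

/-- `lowL` snoc rule for arbitrary vectors, by induction on words. -/
lemma lowL_mulR (hq : q ≠ 0) (x b : Ltr) (v : FA F) :
    lowL F q x (v * wd F [b]) =
      (if b = x then Kg q x v else 0) + lowL F q x v * wd F [b] := by
  have H : lowL F q x ∘ₗ mR b = (if b = x then Kg q x else 0) + mR b ∘ₗ lowL F q x := by
    apply wd_ext; intro l
    simp only [LinearMap.comp_apply, LinearMap.add_apply,
      apply_ite (fun f : FA F →ₗ[F] FA F => f (wd F l)), LinearMap.zero_apply]
    have hmr : ∀ w : FA F, mR (F := F) b w = w * wd F [b] := fun w => rfl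
    rw [hmr, hmr]
    induction l with
    | nil =>
        have h1 : wd F [] * wd F [b] = wd F [b] := by rw [wd_nil, one_mul]
        rw [h1, lowL_nil, zero_mul, add_zero, Kg_nil,
          show (wd F [b] : FA F) = wd F (b :: []) from rfl, lowL_cons hq, lowL_nil,
          mul_zero, smul_zero, add_zero, wd_nil]
    | cons a t ih =>
        rw [wd_cons, mul_assoc, lowL_mul hq, lowL_mul hq, ih, Kg_mul hq]
        by_cases hax : a = x <;> by_cases hbx : b = x <;>
          simp only [hax, hbx, if_pos rfl, if_true, if_false, hbx, reduceIte,
            mul_add, smul_add, add_mul, smul_mul_assoc, mul_assoc, mul_smul_comm,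
            mul_ite, smul_ite, ite_mul, mul_zero, zero_mul, smul_zero, zero_add, add_zero] <;>
          first | rfl | abel
  simpa [mR, apply_ite (fun f : FA F →ₗ[F] FA F => f v)] using DFunLike.congr_fun H v


/-- Commutation of `lowL` past the weight operator. -/
lemma lowL_Kg (hq : q ≠ 0) (x z : Ltr) (v : FA F) :
    lowL F q x (Kg q z v) = q ^ (brk x z) • Kg q z (lowL F q x v) := by
  have H : lowL F q x ∘ₗ Kg q z = q ^ (brk x z) • (Kg q z ∘ₗ lowL F q x) := by
    apply wd_ext; intro l
    simp only [LinearMap.comp_apply, LinearMap.smul_apply]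
    induction l with
    | nil => rw [Kg_nil, ← wd_nil, lowL_nil, map_zero, smul_zero]
    | cons a t ih =>
        rw [wd_cons, Kg_mul hq, map_smul, lowL_mul hq, lowL_mul hq, map_add, map_smul,
          Kg_mul hq, ih]
        by_cases hax : a = x <;>
          simp only [hax, if_pos rfl, reduceIte, if_false, smul_add, smul_smul,
            apply_ite (Kg q z), map_zero, smul_ite, smul_zero, mul_smul_comm]
        all_goals first
          | rfl
          | (congr 2 <;> ring)
  simpa using DFunLike.congr_fun H v

lemma Kg_Kg (hq : q ≠ 0) {x z : Ltr} (h : x ≠ z) (v : FA F) :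
    Kg q x (Kg q z v) = v := by
  have H : Kg q x ∘ₗ Kg q z = LinearMap.id := by
    apply wd_ext; intro l
    simp only [LinearMap.comp_apply, LinearMap.id_apply, Kg_wd, map_smul, smul_smul,
      ← zpow_add₀ hq]
    rw [show ((l.map fun y => brk y z).sum + (l.map fun y => brk y x).sum)
        = 0 from brk_sum_opp (Ne.symm h) l, zpow_zero, one_smul]
  simpa using DFunLike.congr_fun H v

end SqAux
namespace SqAux
open SqPaper

variable {F : Type*} [Field F] {q : F}

/-- The other letter. -/
def oth (x : Ltr) : Ltr := if x = lA then lB else lA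

lemma oth_A : oth lA = lB := by decide
lemma oth_B : oth lB = lA := by decide
lemma oth_ne (x : Ltr) : oth x ≠ x := by revert x; decide
lemma ltr_cases (a x : Ltr) : a = x ∨ a = oth x := by revert a x; decide

lemma zp2 : (q : F) ^ (2 : ℤ) = q ^ 2 := by
  rw [show (2 : ℤ) = ((2 : ℕ) : ℤ) from rfl, zpow_natCast]
lemma zpm2 : (q : F) ^ (-2 : ℤ) = (q ^ 2)⁻¹ := by
  rw [show (-2 : ℤ) = -((2 : ℕ) : ℤ) from rfl, zpow_neg, zpow_natCast]

lemma hat_eq (x : Ltr) :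
    hatOp F q x = (1 - q ^ 2) • (mL x - Kg q x ∘ₗ mR (oth x)) := by
  have hx := ltr_cases x lA
  rw [oth_A] at hx
  rcases hx with h | h <;> subst h
  · rw [hatOp, if_pos rfl, oth_A]; rfl
  · rw [hatOp, if_neg (by decide), oth_B]; rfl

lemma hat_apply (x : Ltr) (v : FA F) :
    hatOp F q x v = (1 - q ^ 2) • (wd F [x] * v - Kg q x (v * wd F [oth x])) := by
  rw [hat_eq]; rfl

lemma lowL_hat_same (hq : q ≠ 0) (x : Ltr) (v : FA F) :
    lowL F q x (hatOp F q x v) =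
      (1 - q ^ 2) • v + q ^ 2 • hatOp F q x (lowL F q x v) := by
  rw [hat_apply, hat_apply, map_smul, map_sub, lowL_mul hq, if_pos rfl,
    lowL_Kg hq, lowL_mulR hq, if_neg (Ne.symm (oth_ne x)).symm, brk_same, zp2, zero_add]
  module

lemma lowL_hat_diff (hq : q ≠ 0) (x : Ltr) (v : FA F) :
    lowL F q x (hatOp F q (oth x) v) =
      (q ^ 2)⁻¹ • hatOp F q (oth x) (lowL F q x v)
        - ((1 - q ^ 2) * (q ^ 2)⁻¹) • v := by
  have hne : oth x ≠ x := oth_ne x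
  have hxo : x ≠ oth x := (oth_ne x).symm
  have hoo : oth (oth x) = x := by revert x; decide
  rw [hat_apply, hat_apply, map_smul, map_sub, lowL_mul hq, if_neg hne,
    lowL_Kg hq, lowL_mulR hq, hoo, if_pos rfl, brk_diff hne, brk_diff hxo, zpm2,
    map_add, Kg_Kg hq hne v, zero_add]
  module

lemma phi_wd (l : List Ltr) : phi F q (wd F l) = phiW F q l := mk_apply _ _

lemma phi_mul (a : Ltr) (v : FA F) :
    phi F q (wd F [a] * v) = hatOp F q a (phi F q v) := by
  have H : phi F q ∘ₗ mL a = hatOp F q a ∘ₗ phi F q := by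
    apply wd_ext; intro l
    simp only [LinearMap.comp_apply, mL_wd, phi_wd]
    rfl
  simpa [mL] using DFunLike.congr_fun H v

/-- The map `Ψ_x = Q(x*_ℓ − (x')*_r K_x)`. -/
def Psi (q : F) (x : Ltr) : FA F →ₗ[F] FA F :=
  (1 - q ^ 2) • (lowL F q x - lowR F q (oth x) ∘ₗ Kg q x)

lemma Psi_apply (x : Ltr) (v : FA F) :
    Psi q x v = (1 - q ^ 2) • (lowL F q x v - lowR F q (oth x) (Kg q x v)) := rfl

lemma Psi_mul_same (hq : q ≠ 0) (x : Ltr) (v : FA F) :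
    Psi q x (wd F [x] * v) = (1 - q ^ 2) • v + q ^ 2 • (wd F [x] * Psi q x v) := by
  rw [Psi_apply, Psi_apply, lowL_mul hq, if_pos rfl, Kg_mul hq, map_smul,
    lowR_mul, if_neg (Ne.symm (oth_ne x)), brk_same, zp2, zero_add, mul_smul_comm,
    mul_sub]
  module

lemma Psi_mul_diff (hq : q ≠ 0) (x : Ltr) (v : FA F) :
    Psi q x (wd F [oth x] * v) =
      (q ^ 2)⁻¹ • (wd F [oth x] * Psi q x v) - ((1 - q ^ 2) * (q ^ 2)⁻¹) • v := by
  have hne : oth x ≠ x := oth_ne x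
  rw [Psi_apply, Psi_apply, lowL_mul hq, if_neg hne, Kg_mul hq, map_smul,
    lowR_mul, if_pos rfl, brk_diff hne, zpm2, Kg_Kg hq hne v, zero_add, smul_add,
    mul_smul_comm, mul_sub]
  module

lemma phi_nil : phi F q (wd F []) = wd F [] := by
  rw [phi_wd]; rfl

lemma key (hq : q ≠ 0) (x : Ltr) (l : List Ltr) :
    phi F q (Psi q x (wd F l)) = lowL F q x (phi F q (wd F l)) := by
  induction l with
  | nil =>
      rw [Psi_apply, lowL_nil, Kg_nil, ← wd_nil, lowR_nil, sub_zero, smul_zero, map_zero,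
        phi_nil, lowL_nil]
  | cons a t ih =>
      rcases ltr_cases a x with h | h <;> subst h
      · rw [wd_cons, Psi_mul_same hq, map_add, map_smul, map_smul, phi_mul, phi_mul, ih,
          lowL_hat_same hq]
      · rw [wd_cons, Psi_mul_diff hq, map_sub, map_smul, map_smul, phi_mul, phi_mul, ih,
          lowL_hat_diff hq]

end SqAux
open SqPaper in
/-- the intertwining identities satisfied by `φ` (Lemma 12.8 of the paper). -/
theorem phi_intertwines (F : Type*) [Field F] (q : F) (hq : q ≠ 0)
    (hq1 : ∀ k : ℕ, 0 < k → q ^ k ≠ 1) :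
    phi F q ∘ₗ AL F = ((1 - q ^ 2) • (AL F - Kop F q ∘ₗ BR F)) ∘ₗ phi F q ∧
    phi F q ∘ₗ BL F = ((1 - q ^ 2) • (BL F - Kinv F q ∘ₗ AR F)) ∘ₗ phi F q ∧
    phi F q ∘ₗ ((1 - q ^ 2) • (lowL F q lA - lowR F q lB ∘ₗ Kop F q))
      = lowL F q lA ∘ₗ phi F q ∧
    phi F q ∘ₗ ((1 - q ^ 2) • (lowL F q lB - lowR F q lA ∘ₗ Kinv F q))
      = lowL F q lB ∘ₗ phi F q := by
  refine ⟨?_, ?_, ?_, ?_⟩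
  · have e : ((1 - q ^ 2) • (AL F - Kop F q ∘ₗ BR F)) = hatOp F q lA := by
      rw [hatOp, if_pos rfl]
    rw [e]
    apply SqAux.wd_ext; intro l
    simp only [LinearMap.comp_apply]
    rw [show (AL F) (wd F l) = wd F [lA] * wd F l from rfl, SqAux.phi_mul]
  · have e : ((1 - q ^ 2) • (BL F - Kinv F q ∘ₗ AR F)) = hatOp F q lB := by
      rw [hatOp, if_neg (by decide)]
    rw [e]
    apply SqAux.wd_ext; intro l
    simp only [LinearMap.comp_apply]
    rw [show (BL F) (wd F l) = wd F [lB] * wd F l from rfl, SqAux.phi_mul]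
  · have e : (1 - q ^ 2) • (lowL F q lA - lowR F q lB ∘ₗ Kop F q) = SqAux.Psi q lA := by
      unfold SqAux.Psi
      rw [SqAux.oth_A]
      rfl
    rw [e]
    apply SqAux.wd_ext; intro l
    simp only [LinearMap.comp_apply]
    exact SqAux.key hq lA l
  · have e : (1 - q ^ 2) • (lowL F q lB - lowR F q lA ∘ₗ Kinv F q) = SqAux.Psi q lB := by
      unfold SqAux.Psi
      rw [SqAux.oth_B]
      rfl
    rw [e]
    apply SqAux.wd_ext; intro l
    simp only [LinearMap.comp_apply]
    exact SqAux.key hq lB l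
end
end
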